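/- For the Wright–Fisher diffusion model with Λ({0}) = m₀ > 0, selection σ > 0, mutation rates θ₀ = 0, θ₁ ≥ 0, θ = θ₁, the probabilities pₙ = C · (2σ/m₀)^{n-1} / ((2+2θ/m₀)(3+2θ/m₀)⋯(n+2θ/m₀)) for n ≥ 1, with C = 1/₁F₁(1; 2+2θ/m₀; 2σ/m₀), satisfy the recursion (m₀(n+1)/2 + θ₁)pₙ₊₁ = σpₙ for all n ≥ 1 and ∑ₙ₌₁^∞ pₙ = 1. -/

import Mathlib

theorem wright_fisher_stationary_no_beneficial_mutation
    (m₀ σ θ₁ θ : ℝ) (hm₀ : 0 < m₀) (hσ : 0 < σ) (hθ₁ : 0 ≤ θ₁) (hθ : θ = θ₁)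
    (C : ℝ)
    (hC : C = 1 / (∑' k : ℕ,
      (2 * σ / m₀) ^ k / (∏ i ∈ Finset.range k, (2 + 2 * θ / m₀ + i))))
    (p : ℕ → ℝ)
    (hp : ∀ n, 1 ≤ n →
      p n = C * (2 * σ / m₀) ^ (n - 1)
        / (∏ i ∈ Finset.range (n - 1), (2 + 2 * θ / m₀ + i))) :
    (∀ n : ℕ, 1 ≤ n →
      (m₀ * ((n : ℝ) + 1) / 2 + θ₁) * p (n + 1) = σ * p n) ∧
    (∑' n : ℕ, p (n + 1)) = 1 := by
  set x : ℝ := 2 * σ / m₀ with hx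
  have hxpos : 0 < x := by positivity
  have hθ0 : 0 ≤ θ := hθ ▸ hθ₁
  have ha : (2:ℝ) ≤ 2 + 2 * θ / m₀ := by
    have : 0 ≤ 2 * θ / m₀ := by positivity
    linarith
  set f : ℕ → ℝ := fun k => x ^ k / (∏ i ∈ Finset.range k, (2 + 2 * θ / m₀ + i)) with hf
  have hprodpos : ∀ k, 0 < ∏ i ∈ Finset.range k, (2 + 2 * θ / m₀ + (i:ℝ)) := by
    intro k
    apply Finset.prod_pos
    intro i _
    have : (0:ℝ) ≤ i := Nat.cast_nonneg i
    linarith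
  have hfpos : ∀ k, 0 < f k := fun k => div_pos (pow_pos hxpos k) (hprodpos k)
  have hstep : ∀ k : ℕ, f (k + 1) = f k * (x / (2 + 2 * θ / m₀ + k)) := by
    intro k
    have hk : (0:ℝ) < 2 + 2 * θ / m₀ + k := by
      have : (0:ℝ) ≤ k := Nat.cast_nonneg k
      linarith
    simp only [hf, Finset.prod_range_succ, pow_succ]
    field_simp
  -- summability
  obtain ⟨N, hN⟩ : ∃ N : ℕ, 2 * x ≤ 2 + 2 * θ / m₀ + N := by
    obtain ⟨N, hN⟩ := exists_nat_ge (2 * x)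
    exact ⟨N, by linarith⟩
  have hsum : Summable f := by
    apply summable_of_ratio_norm_eventually_le (r := 1/2) (by norm_num)
    filter_upwards [Filter.eventually_ge_atTop N] with k hk
    have hk' : 2 * x ≤ 2 + 2 * θ / m₀ + k := by
      have : (N:ℝ) ≤ k := Nat.cast_le.mpr hk
      linarith
    have hkpos : (0:ℝ) < 2 + 2 * θ / m₀ + k := by linarith
    rw [hstep k]
    rw [Real.norm_eq_abs, Real.norm_eq_abs, abs_of_pos (hfpos _),
      abs_of_pos (by positivity : 0 < f k * (x / (2 + 2 * θ / m₀ + k)))]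
    have : x / (2 + 2 * θ / m₀ + k) ≤ 1/2 := by
      rw [div_le_div_iff₀ hkpos (by norm_num)]
      linarith
    calc f k * (x / (2 + 2 * θ / m₀ + k)) ≤ f k * (1/2) := by
          exact mul_le_mul_of_nonneg_left this (hfpos k).le
      _ = 1/2 * f k := by ring
  set S : ℝ := ∑' k, f k with hS
  have hS1 : 1 ≤ S := by
    have h0 : f 0 = 1 := by simp [hf]
    calc (1:ℝ) = f 0 := h0.symm
      _ ≤ S := Summable.le_tsum hsum 0 (fun i _ => (hfpos i).le)
  have hSne : S ≠ 0 := by linarith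
  have hCS : C = 1 / S := hC
  constructor
  · intro n hn
    obtain ⟨m, rfl⟩ := Nat.exists_eq_add_of_le hn
    have h1 : p (1 + m) = C * x ^ m / (∏ i ∈ Finset.range m, (2 + 2 * θ / m₀ + i)) := by
      rw [hp (1 + m) (by omega)]
      congr 2 <;> simp
    have h2 : p (1 + m + 1) = C * x ^ (m+1) / (∏ i ∈ Finset.range (m+1), (2 + 2 * θ / m₀ + i)) := by
      rw [hp (1 + m + 1) (by omega)]
      congr 2 <;> · congr 1; omega
    rw [h1, h2]
    have hmpos : (0:ℝ) < 2 + 2 * θ / m₀ + m := by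
      have : (0:ℝ) ≤ m := Nat.cast_nonneg m
      linarith
    have hppos := hprodpos m
    rw [Finset.prod_range_succ, pow_succ]
    have hcast : ((1 + m : ℕ) : ℝ) = 1 + (m:ℝ) := by push_cast; ring
    have hcoef : m₀ * ((1:ℝ) + (m:ℝ) + 1) / 2 + θ₁ = (m₀/2) * (2 + 2 * θ / m₀ + m) := by
      rw [hθ]; field_simp; ring
    have hmx : m₀ * x = 2 * σ := by rw [hx]; field_simp
    rw [hcast, hcoef]
    set P := ∏ i ∈ Finset.range m, (2 + 2 * θ / m₀ + (i:ℝ)) with hP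
    have hPne : P ≠ 0 := ne_of_gt hppos
    have hmne : (2 + 2 * θ / m₀ + (m:ℝ)) ≠ 0 := ne_of_gt hmpos
    field_simp
    linear_combination C * hmx
  · have heq : ∀ n : ℕ, p (n + 1) = C * f n := by
      intro n
      rw [hp (n + 1) (by omega)]
      simp [hf, mul_div_assoc]
    calc (∑' n : ℕ, p (n + 1)) = ∑' n : ℕ, C * f n := by exact tsum_congr heq
      _ = C * S := tsum_mul_left
      _ = 1 := by rw [hCS]; field_simp
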